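/- Let f be a good profile with interface at ξ0 ∈ (0,∞) and define the pressure g(ξ) = (m/(m−1)) f(ξ)^{m−1} on (0,ξ0). Assume g is twice differentiable on (0,ξ0), that the left limit s := lim_{ξ→ξ0⁻} g'(ξ) exists and is finite, and that g(ξ)·g''(ξ) → 0 as ξ → ξ0⁻. Then s² + β ξ0 s + m ξ0^σ = 0; consequently β² ξ0² ≥ 4 m ξ0^σ, that is, ξ0 ≤ ξ_max. -/

import Mathlib

open Real Set Filter Topology

/-- The threshold `ξ_max = (1/(m(σ-2)²))^{1/(σ-2)}`. -/
noncomputable def xiMax (m σ : ℝ) : ℝ := (1 / (m * (σ - 2) ^ 2)) ^ (1 / (σ - 2))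

/-- A good profile with interface at `ξ0` for the equation
`(f^m)'' - α f + β ξ f' + ξ^σ f^{2-m} = 0`, where `α = (σ+2)/((σ-2)(m-1))`,
`β = 2/(σ-2)` (the case `m + p = 2`, `p = 2 - m`). -/
def IsGoodProfile (m σ ξ0 : ℝ) (f : ℝ → ℝ) : Prop :=
  ContinuousOn f (Ici 0) ∧
  (∀ ξ, 0 ≤ ξ → 0 ≤ f ξ) ∧
  (∀ ξ ∈ Ioo 0 ξ0, 0 < f ξ) ∧
  (∀ ξ, ξ0 ≤ ξ → f ξ = 0) ∧
  (∀ ξ ∈ Ioo 0 ξ0, DifferentiableAt ℝ f ξ) ∧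
  ContDiffOn ℝ 1 (fun s => f s ^ m) (Ioi 0) ∧
  deriv (fun s => f s ^ m) ξ0 = 0 ∧
  (∀ ξ ∈ Ioo 0 ξ0,
    deriv (deriv fun s => f s ^ m) ξ
      - (σ + 2) / ((σ - 2) * (m - 1)) * f ξ
      + 2 / (σ - 2) * ξ * deriv f ξ
      + ξ ^ σ * f ξ ^ (2 - m) = 0) ∧
  ((0 < f 0 ∧ derivWithin f (Ici 0) 0 = 0) ∨
    (f 0 = 0 ∧ derivWithin (fun s => f s ^ m) (Ici 0) 0 = 0))

/-- the interface relation for the pressure variable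
`g = (m/(m-1)) f^{m-1}`: if `g' → s` and `g g'' → 0` at the interface `ξ0⁻`, then
`s² + β ξ0 s + m ξ0^σ = 0`, hence `β² ξ0² ≥ 4 m ξ0^σ`, i.e. `ξ0 ≤ ξ_max`. -/
theorem pressure_interface_relation
    (m σ ξ0 : ℝ) (hm1 : 1 < m) (hm2 : m < 2) (hσ : 2 < σ) (hξ0 : 0 < ξ0)
    (f : ℝ → ℝ) (hf : IsGoodProfile m σ ξ0 f)
    (g : ℝ → ℝ) (hg : ∀ ξ ∈ Ioo 0 ξ0, g ξ = m / (m - 1) * f ξ ^ (m - 1))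
    (hg1 : ∀ ξ ∈ Ioo 0 ξ0, DifferentiableAt ℝ g ξ)
    (hg2 : ∀ ξ ∈ Ioo 0 ξ0, DifferentiableAt ℝ (deriv g) ξ)
    (s : ℝ) (hs : Tendsto (deriv g) (𝓝[<] ξ0) (𝓝 s))
    (hgg : Tendsto (fun ξ => g ξ * deriv (deriv g) ξ) (𝓝[<] ξ0) (𝓝 0)) :
    s ^ 2 + 2 / (σ - 2) * ξ0 * s + m * ξ0 ^ σ = 0 ∧
    4 * m * ξ0 ^ σ ≤ (2 / (σ - 2)) ^ 2 * ξ0 ^ 2 ∧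
    ξ0 ≤ xiMax m σ := by
  obtain ⟨hcont, hnn, hpos, hzero, hdiff, hC1, hder0, heqn, hbc⟩ := hf
  have hm1' : (0:ℝ) < m - 1 := by linarith
  have hσ' : (0:ℝ) < σ - 2 := by linarith
  set α : ℝ := (σ + 2) / ((σ - 2) * (m - 1)) with hα
  set β : ℝ := 2 / (σ - 2) with hβ
  -- derivative of g in terms of f
  have hgder : ∀ x ∈ Ioo (0:ℝ) ξ0, deriv g x = m * f x ^ (m - 2) * deriv f x := by
    intro x hx
    have hfx : 0 < f x := hpos x hx
    have hmem : Ioo (0:ℝ) ξ0 ∈ 𝓝 x := isOpen_Ioo.mem_nhds hx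
    have hge : g =ᶠ[𝓝 x] fun y => m / (m - 1) * f y ^ (m - 1) :=
      Filter.eventually_of_mem hmem fun y hy => hg y hy
    have hgd : HasDerivAt (fun y => m / (m - 1) * f y ^ (m - 1))
        (m / (m - 1) * (deriv f x * (m - 1) * f x ^ (m - 1 - 1))) x :=
      ((hdiff x hx).hasDerivAt.rpow_const (Or.inl hfx.ne')).const_mul _
    rw [hge.deriv_eq, hgd.deriv, show m - 1 - 1 = m - 2 by ring]
    field_simp
  -- derivative of f^m in terms of g
  have hfm' : ∀ x ∈ Ioo (0:ℝ) ξ0, deriv (fun s => f s ^ m) x = f x * deriv g x := by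
    intro x hx
    have hfx : 0 < f x := hpos x hx
    have e1 : f x ^ (m - 1) = f x ^ (m - 2) * f x := by
      rw [show m - 1 = (m - 2) + 1 by ring, Real.rpow_add hfx, Real.rpow_one]
    rw [((hdiff x hx).hasDerivAt.rpow_const (Or.inl hfx.ne')).deriv, hgder x hx, e1]
    ring
  -- the pressure equation on (0, ξ0)
  have key : ∀ ξ ∈ Ioo (0:ℝ) ξ0,
      (m - 1) * (g ξ * deriv (deriv g) ξ) + (deriv g ξ) ^ 2
        - (m - 1) * α * g ξ + β * ξ * deriv g ξ + m * ξ ^ σ = 0 := by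
    intro ξ hξ
    have hfx : 0 < f ξ := hpos ξ hξ
    have hmem : Ioo (0:ℝ) ξ0 ∈ 𝓝 ξ := isOpen_Ioo.mem_nhds hξ
    have hfd : DifferentiableAt ℝ f ξ := hdiff ξ hξ
    have hev : (deriv fun s => f s ^ m) =ᶠ[𝓝 ξ] fun x => f x * deriv g x :=
      Filter.eventually_of_mem hmem fun y hy => hfm' y hy
    have hdd : deriv (deriv fun s => f s ^ m) ξ
        = deriv f ξ * deriv g ξ + f ξ * deriv (deriv g) ξ :=
      hev.deriv_eq.trans (hfd.hasDerivAt.mul ((hg2 ξ hξ).hasDerivAt)).deriv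
    have h0 := heqn ξ hξ
    rw [hdd] at h0
    have e1 : f ξ ^ (m - 2) * f ξ = f ξ ^ (m - 1) := by
      rw [show m - 1 = (m - 2) + 1 by ring, Real.rpow_add hfx, Real.rpow_one]
    have e2 : f ξ ^ (m - 2) * f ξ ^ (2 - m) = 1 := by
      rw [← Real.rpow_add hfx, show m - 2 + (2 - m) = 0 by ring, Real.rpow_zero]
    have e3 : (m - 1) * g ξ = m * f ξ ^ (m - 1) := by
      rw [hg ξ hξ]; field_simp
    have e4 : deriv g ξ = m * f ξ ^ (m - 2) * deriv f ξ := hgder ξ hξ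
    linear_combination (m * f ξ ^ (m - 2)) * h0 + (deriv g ξ + β * ξ) * e4
      + (deriv (deriv g) ξ - α) * e3 + (α * m - m * deriv (deriv g) ξ) * e1
      - m * ξ ^ σ * e2
  -- the set Ioo 0 ξ0 belongs to the left-neighborhood filter
  have hIoo : Ioo (0:ℝ) ξ0 ∈ 𝓝[<] ξ0 := by
    rw [← nhdsWithin_Ioo_eq_nhdsLT hξ0]
    exact self_mem_nhdsWithin
  -- f → 0 and g → 0 from the left at ξ0
  have hf0 : Tendsto f (𝓝[<] ξ0) (𝓝 0) := by
    have hc : Tendsto f (𝓝[Ici 0] ξ0) (𝓝 (f ξ0)) := hcont ξ0 hξ0.le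
    rw [hzero ξ0 le_rfl] at hc
    exact hc.mono_left ((nhdsWithin_Ioo_eq_nhdsLT hξ0) ▸
      nhdsWithin_mono ξ0 (fun y hy => le_of_lt hy.1))
  have hgl : Tendsto g (𝓝[<] ξ0) (𝓝 0) := by
    have hrp : Tendsto (fun x => f x ^ (m - 1)) (𝓝[<] ξ0) (𝓝 ((0:ℝ) ^ (m - 1))) :=
      ((Real.continuousAt_rpow_const 0 (m - 1) (Or.inr hm1'.le)).tendsto).comp hf0
    rw [Real.zero_rpow hm1'.ne'] at hrp
    have h1 : Tendsto (fun x => m / (m - 1) * f x ^ (m - 1)) (𝓝[<] ξ0)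
        (𝓝 (m / (m - 1) * 0)) := hrp.const_mul _
    rw [mul_zero] at h1
    exact h1.congr' (Filter.eventually_of_mem hIoo fun y hy => (hg y hy).symm)
  have hid : Tendsto (fun ξ : ℝ => ξ) (𝓝[<] ξ0) (𝓝 ξ0) :=
    tendsto_id.mono_right nhdsWithin_le_nhds
  have hpowσ : Tendsto (fun ξ : ℝ => ξ ^ σ) (𝓝[<] ξ0) (𝓝 (ξ0 ^ σ)) :=
    ((Real.continuousAt_rpow_const ξ0 σ (Or.inl hξ0.ne')).tendsto).comp hid
  have hbig : Tendsto (fun ξ =>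
      (m - 1) * (g ξ * deriv (deriv g) ξ) + (deriv g ξ) ^ 2
        - (m - 1) * α * g ξ + β * ξ * deriv g ξ + m * ξ ^ σ) (𝓝[<] ξ0)
      (𝓝 ((m - 1) * 0 + s ^ 2 - (m - 1) * α * 0 + β * ξ0 * s + m * ξ0 ^ σ)) :=
    (((((hgg.const_mul (m - 1)).add (hs.pow 2)).sub (hgl.const_mul ((m - 1) * α))).add
      ((hid.const_mul β).mul hs)).add (hpowσ.const_mul m))
  have hzerol : Tendsto (fun ξ =>
      (m - 1) * (g ξ * deriv (deriv g) ξ) + (deriv g ξ) ^ 2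
        - (m - 1) * α * g ξ + β * ξ * deriv g ξ + m * ξ ^ σ) (𝓝[<] ξ0) (𝓝 0) :=
    tendsto_const_nhds.congr' (Filter.eventually_of_mem hIoo fun y hy => (key y hy).symm)
  have hL : (m - 1) * 0 + s ^ 2 - (m - 1) * α * 0 + β * ξ0 * s + m * ξ0 ^ σ = 0 :=
    tendsto_nhds_unique hbig hzerol
  have h1 : s ^ 2 + β * ξ0 * s + m * ξ0 ^ σ = 0 := by linarith [hL]
  refine ⟨h1, ?_, ?_⟩
  · rw [hβ] at h1
    nlinarith [sq_nonneg (2 * s + 2 / (σ - 2) * ξ0), h1]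
  · have h2 : 4 * m * ξ0 ^ σ ≤ β ^ 2 * ξ0 ^ 2 := by
      nlinarith [sq_nonneg (2 * s + β * ξ0), h1]
    have hA : 4 * m * ξ0 ^ σ * (σ - 2) ^ 2 ≤ 4 * ξ0 ^ 2 := by
      rw [show β ^ 2 * ξ0 ^ 2 = 4 * ξ0 ^ 2 / (σ - 2) ^ 2 by rw [hβ]; field_simp; ring] at h2
      exact (le_div_iff₀ (by positivity)).mp h2
    have hsplit : ξ0 ^ σ = ξ0 ^ (σ - 2) * ξ0 ^ 2 := by
      rw [show (ξ0:ℝ) ^ (2:ℕ) = ξ0 ^ ((2:ℕ):ℝ) from (Real.rpow_natCast ξ0 2).symm,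
        ← Real.rpow_add hξ0]
      norm_num
    have hkey : ξ0 ^ (σ - 2) ≤ 1 / (m * (σ - 2) ^ 2) := by
      rw [hsplit] at hA
      rw [le_div_iff₀ (by positivity)]
      nlinarith [pow_pos hξ0 2, Real.rpow_pos_of_pos hξ0 (σ - 2), hA]
    have hξeq : ξ0 = (ξ0 ^ (σ - 2)) ^ (1 / (σ - 2)) := by
      rw [← Real.rpow_mul hξ0.le, mul_one_div, div_self hσ'.ne', Real.rpow_one]
    calc ξ0 = (ξ0 ^ (σ - 2)) ^ (1 / (σ - 2)) := hξeq
      _ ≤ (1 / (m * (σ - 2) ^ 2)) ^ (1 / (σ - 2)) :=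
          Real.rpow_le_rpow (Real.rpow_nonneg hξ0.le _) hkey (by positivity)
      _ = xiMax m σ := rfl
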